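/- In the weighted mixture partial likelihood, as tau -> 0+ the objective log PtildeL_tau(beta) converges, uniformly on compact subsets of R^p, to the log partial likelihood based solely on the observed data; consequently if the observed-data log partial likelihood has a unique maximizer beta_hat_MPLE and the maximizers beta_hat_{WM,tau} stay in a fixed compact set, then beta_hat_{WM,tau} -> beta_hat_MPLE as tau -> 0+. -/

import Mathlib

open Real Filter Topology
open scoped RealInnerProductSpace BigOperators

set_option maxHeartbeats 1000000 in
/-- As `τ → 0⁺`, the weighted-mixture log partial likelihood converges uniformly on
compact sets to the observed-data log partial likelihood; consequently, if the latter has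
a unique maximizer and the weighted-mixture maximizers stay in a fixed compact set, they
converge to the MPLE. -/
theorem weighted_mixture_small_tau_limit (p n M : ℕ) (hn : 0 < n) (hM : 0 < M)
    (Z : Fin (n + M) → EuclideanSpace ℝ (Fin p)) (Yt : Fin (n + M) → ℝ)
    (hYt : ∀ i, 0 < Yt i) (δ : Fin (n + M) → ℝ)
    (hδ : ∀ i, δ i = 0 ∨ δ i = 1) (hδsyn : ∀ i : Fin (n + M), n ≤ i.1 → δ i = 1)
    (R : Fin (n + M) → Finset (Fin (n + M))) (hR : ∀ i j, j ∈ R i ↔ Yt i ≤ Yt j)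
    (L : ℝ → EuclideanSpace ℝ (Fin p) → ℝ)
    (hL : ∀ τ β, L τ β = ∑ i : Fin (n + M), (if i.1 < n then 1 else τ / (M : ℝ)) * δ i *
      (⟪Z i, β⟫ - Real.log (∑ j ∈ R i,
        (if j.1 < n then 1 else τ / (M : ℝ)) * Real.exp ⟪Z j, β⟫)))
    (L0 : EuclideanSpace ℝ (Fin p) → ℝ)
    (hL0 : ∀ β, L0 β = ∑ i ∈ Finset.univ.filter (fun i : Fin (n + M) => i.1 < n),
      δ i * (⟪Z i, β⟫ - Real.log (∑ j ∈ (R i).filter (fun j => j.1 < n),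
        Real.exp ⟪Z j, β⟫))) :
    (∀ K : Set (EuclideanSpace ℝ (Fin p)), IsCompact K →
      TendstoUniformlyOn (fun τ => L τ) L0 (nhdsWithin (0 : ℝ) (Set.Ioi 0)) K) ∧
    (∀ βM : EuclideanSpace ℝ (Fin p), (∀ β, β ≠ βM → L0 β < L0 βM) →
      ∀ bhat : ℝ → EuclideanSpace ℝ (Fin p),
        (∀ τ : ℝ, 0 < τ → ∀ β, L τ β ≤ L τ (bhat τ)) →
        (∃ K : Set (EuclideanSpace ℝ (Fin p)), IsCompact K ∧ ∀ τ : ℝ, 0 < τ → bhat τ ∈ K) →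
        Filter.Tendsto bhat (nhdsWithin (0 : ℝ) (Set.Ioi 0)) (nhds βM)) := by
  classical
  have hMpos : (0 : ℝ) < M := by exact_mod_cast hM
  have hself : ∀ i, i ∈ R i := fun i => (hR i i).mpr le_rfl
  set A : Fin (n + M) → EuclideanSpace ℝ (Fin p) → ℝ :=
    fun i β => ∑ j ∈ (R i).filter (fun j => j.1 < n), Real.exp ⟪Z j, β⟫ with hAdef
  set B : Fin (n + M) → EuclideanSpace ℝ (Fin p) → ℝ :=
    fun i β => ∑ j ∈ (R i).filter (fun j => ¬ j.1 < n), Real.exp ⟪Z j, β⟫ with hBdef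
  set G : ℝ → EuclideanSpace ℝ (Fin p) → ℝ := fun τ β =>
    ∑ i : Fin (n + M), if ((R i).filter (fun j => j.1 < n)).Nonempty then
      (if i.1 < n then 1 else τ / (M : ℝ)) * δ i *
        (⟪Z i, β⟫ - Real.log (A i β + τ / (M : ℝ) * B i β))
    else ((τ / (M : ℝ)) * δ i * (⟪Z i, β⟫ - Real.log (B i β)) -
      δ i * (τ / (M : ℝ) * Real.log (τ / (M : ℝ)))) with hGdef
  -- basic positivity facts
  have hApos : ∀ i β, ((R i).filter (fun j => j.1 < n)).Nonempty → 0 < A i β := by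
    intro i β hne
    exact Finset.sum_pos (fun j _ => Real.exp_pos _) hne
  have hBnonneg : ∀ i β, 0 ≤ B i β := fun i β =>
    Finset.sum_nonneg (fun j _ => (Real.exp_pos _).le)
  have hemp : ∀ i, ¬ ((R i).filter (fun j => j.1 < n)).Nonempty → ¬ i.1 < n := by
    intro i h hi
    exact h ⟨i, Finset.mem_filter.mpr ⟨hself i, hi⟩⟩
  have hBpos : ∀ i β, ¬ i.1 < n → 0 < B i β := by
    intro i β hi
    refine Finset.sum_pos' (fun j _ => (Real.exp_pos _).le)
      ⟨i, Finset.mem_filter.mpr ⟨hself i, hi⟩, Real.exp_pos _⟩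
  -- sum splitting inside the log
  have hsplit : ∀ τ (β : EuclideanSpace ℝ (Fin p)) i,
      (∑ j ∈ R i, (if j.1 < n then 1 else τ / (M : ℝ)) * Real.exp ⟪Z j, β⟫)
        = A i β + τ / (M : ℝ) * B i β := by
    intro τ β i
    rw [← Finset.sum_filter_add_sum_filter_not (R i) (fun j => j.1 < n)]
    congr 1
    · refine Finset.sum_congr rfl fun j hj => ?_
      rw [if_pos (Finset.mem_filter.mp hj).2, one_mul]
    · rw [Finset.mul_sum]
      refine Finset.sum_congr rfl fun j hj => ?_
      rw [if_neg (Finset.mem_filter.mp hj).2]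
  -- G agrees with L for τ > 0
  have hGL : ∀ τ : ℝ, 0 < τ → G τ = L τ := by
    intro τ hτ
    funext β
    rw [hL]
    refine Finset.sum_congr rfl fun i _ => ?_
    rw [hsplit τ β i]
    by_cases hne : ((R i).filter (fun j => j.1 < n)).Nonempty
    · rw [if_pos hne]
    · rw [if_neg hne]
      have hi : ¬ i.1 < n := hemp i hne
      have hA0 : A i β = 0 := by
        simp [hAdef, Finset.not_nonempty_iff_eq_empty.mp hne]
      have hτM : (0 : ℝ) < τ / (M : ℝ) := div_pos hτ hMpos
      rw [hA0, zero_add, if_neg hi,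
        Real.log_mul (ne_of_gt hτM) (ne_of_gt (hBpos i β hi))]
      ring
  -- G at 0 is L0
  have hG0 : G 0 = L0 := by
    funext β
    rw [hL0, Finset.sum_filter, hGdef]
    refine Finset.sum_congr rfl fun i _ => ?_
    by_cases hne : ((R i).filter (fun j => j.1 < n)).Nonempty
    · rw [if_pos hne]
      by_cases hi : i.1 < n
      · rw [if_pos hi, if_pos hi]
        simp only [zero_div, zero_mul, add_zero, one_mul]
        rfl
      · rw [if_neg hi, if_neg hi]
        simp only [zero_div, zero_mul]
    · rw [if_neg hne, if_neg (hemp i hne)]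
      simp only [zero_div, zero_mul, mul_zero, sub_zero]
  -- joint continuity of G on [0,∞) × ℝ^p
  have hGcont : ContinuousOn (Function.uncurry G)
      ((Set.Ici (0 : ℝ)) ×ˢ (Set.univ : Set (EuclideanSpace ℝ (Fin p)))) := by
    refine continuousOn_finset_sum Finset.univ fun i _ => ?_
    have cZ : ∀ j, Continuous fun q : ℝ × EuclideanSpace ℝ (Fin p) => ⟪Z j, q.2⟫ :=
      fun j => continuous_const.inner continuous_snd
    have cA : Continuous fun q : ℝ × EuclideanSpace ℝ (Fin p) => A i q.2 :=
      continuous_finset_sum _ fun j _ => (Real.continuous_exp.comp (cZ j))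
    have cB : Continuous fun q : ℝ × EuclideanSpace ℝ (Fin p) => B i q.2 :=
      continuous_finset_sum _ fun j _ => (Real.continuous_exp.comp (cZ j))
    by_cases hne : ((R i).filter (fun j => j.1 < n)).Nonempty
    · simp only [if_pos hne]
      have cS : Continuous fun q : ℝ × EuclideanSpace ℝ (Fin p) =>
          A i q.2 + q.1 / (M : ℝ) * B i q.2 :=
        cA.add ((continuous_fst.div_const _).mul cB)
      have clog : ContinuousOn (fun q : ℝ × EuclideanSpace ℝ (Fin p) =>
          Real.log (A i q.2 + q.1 / (M : ℝ) * B i q.2))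
          ((Set.Ici (0 : ℝ)) ×ˢ (Set.univ : Set (EuclideanSpace ℝ (Fin p)))) := by
        refine cS.continuousOn.log fun q hq => ?_
        have h1 : 0 < A i q.2 := hApos i q.2 hne
        have h2 : 0 ≤ q.1 / (M : ℝ) * B i q.2 :=
          mul_nonneg (div_nonneg hq.1 hMpos.le) (hBnonneg i q.2)
        exact ne_of_gt (add_pos_of_pos_of_nonneg h1 h2)
      have cw : Continuous fun q : ℝ × EuclideanSpace ℝ (Fin p) =>
          (if i.1 < n then (1 : ℝ) else q.1 / (M : ℝ)) := by
        by_cases hi : i.1 < n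
        · simp only [if_pos hi]; exact continuous_const
        · simp only [if_neg hi]; exact continuous_fst.div_const _
      exact ((cw.mul continuous_const).continuousOn.mul
        ((cZ i).continuousOn.sub clog))
    · simp only [if_neg hne]
      have hi : ¬ i.1 < n := hemp i hne
      have clogB : Continuous fun q : ℝ × EuclideanSpace ℝ (Fin p) => Real.log (B i q.2) :=
        cB.log fun q => ne_of_gt (hBpos i q.2 hi)
      have cphi : Continuous fun q : ℝ × EuclideanSpace ℝ (Fin p) =>
          q.1 / (M : ℝ) * Real.log (q.1 / (M : ℝ)) :=
        Real.continuous_mul_log.comp (continuous_fst.div_const _)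
      exact ((((continuous_fst.div_const _).mul continuous_const).mul
        ((cZ i).sub clogB)).sub (continuous_const.mul cphi)).continuousOn
  -- Part 1: uniform convergence on compacts
  have huc : ∀ K : Set (EuclideanSpace ℝ (Fin p)), IsCompact K →
      TendstoUniformlyOn (fun τ => L τ) L0 (nhdsWithin (0 : ℝ) (Set.Ioi 0)) K := by
    intro K hK
    have hcomp : IsCompact ((Set.Icc (0 : ℝ) 1) ×ˢ K) := isCompact_Icc.prod hK
    have hucont : UniformContinuousOn (Function.uncurry G) ((Set.Icc (0 : ℝ) 1) ×ˢ K) :=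
      hcomp.uniformContinuousOn_of_continuous
        (hGcont.mono (Set.prod_mono Set.Icc_subset_Ici_self (Set.subset_univ K)))
    have hGU : TendstoUniformlyOn G (G 0) (𝓝[Set.Icc (0 : ℝ) 1] 0) K :=
      hucont.tendstoUniformlyOn (Set.mem_Icc.mpr ⟨le_rfl, zero_le_one⟩)
    have hle : 𝓝[Set.Ioi (0 : ℝ)] 0 ≤ 𝓝[Set.Icc (0 : ℝ) 1] 0 := by
      rw [← nhdsWithin_Ioc_eq_nhdsGT (zero_lt_one (α := ℝ))]
      exact nhdsWithin_mono _ Set.Ioc_subset_Icc_self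
    have h2 : TendstoUniformlyOn G (G 0) (𝓝[Set.Ioi (0 : ℝ)] 0) K :=
      fun u hu => (hGU u hu).filter_mono hle
    rw [← hG0]
    apply h2.congr
    filter_upwards [self_mem_nhdsWithin] with τ hτ
    intro β _
    exact congrFun (hGL τ hτ) β
  -- continuity of L0
  have hL0cont : Continuous L0 := by
    rw [← hG0]
    have : Continuous fun β : EuclideanSpace ℝ (Fin p) => Function.uncurry G (0, β) := by
      apply ContinuousOn.comp_continuous hGcont
        (continuous_const.prodMk continuous_id)
      intro β
      exact ⟨Set.self_mem_Ici, Set.mem_univ _⟩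
    exact this
  refine ⟨huc, ?_⟩
  -- Part 2: convergence of maximizers
  rintro βM hmaxU bhat hbmax ⟨K, hK, hbK⟩
  have hKi : IsCompact (insert βM K) := hK.insert βM
  rw [tendsto_def]
  intro s hs
  obtain ⟨U, hUs, hUo, hUm⟩ := mem_nhds_iff.mp hs
  suffices h : bhat ⁻¹' U ∈ 𝓝[Set.Ioi (0 : ℝ)] 0 by
    exact mem_of_superset h fun τ hτ => hUs hτ
  set C := insert βM K \ U with hCdef
  by_cases hCe : C.Nonempty
  · obtain ⟨β₀, hβ₀C, hβ₀max⟩ := (hKi.diff hUo).exists_isMaxOn hCe hL0cont.continuousOn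
    have hβ₀ne : β₀ ≠ βM := fun h => hβ₀C.2 (h ▸ hUm)
    have hgap : L0 β₀ < L0 βM := hmaxU β₀ hβ₀ne
    set η := (L0 βM - L0 β₀) / 2 with hηdef
    have hη : 0 < η := by simp [hηdef]; linarith
    have hunif := huc _ hKi
    rw [Metric.tendstoUniformlyOn_iff] at hunif
    filter_upwards [hunif η hη, self_mem_nhdsWithin] with τ hτ hτpos
    by_contra hnot
    have hbC : bhat τ ∈ C := ⟨Set.mem_insert_of_mem _ (hbK τ hτpos), hnot⟩
    have h1 : dist (L0 (bhat τ)) (L τ (bhat τ)) < η := hτ _ hbC.1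
    have h2 : L0 (bhat τ) ≤ L0 β₀ := hβ₀max hbC
    have h3 : dist (L0 βM) (L τ βM) < η := hτ βM (Set.mem_insert _ _)
    have h4 : L τ βM ≤ L τ (bhat τ) := hbmax τ hτpos βM
    rw [Real.dist_eq, abs_sub_lt_iff] at h1 h3
    have := h1.2
    have := h3.1
    simp only [hηdef] at *
    linarith
  · filter_upwards [self_mem_nhdsWithin] with τ hτpos
    by_contra h
    exact hCe ⟨bhat τ, Set.mem_insert_of_mem _ (hbK τ hτpos), h⟩
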